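/- Let σ be a permutation of {1,…,r} which is not the identity and which has at least one fixed point. Then there exist i, j ∈ {1,…,r} with σ(i) ≠ i and σ(j) = j such that the permutation σ' = σ ∘ (i j) (σ composed with the transposition of i and j) satisfies c_>(σ') = c_>(σ) + 1 and c_<(σ') = c_<(σ). -/

import Mathlib

open scoped BigOperators

namespace PermStats

/-- The number of drops `c_<(σ) = #{i : σ(i) < i}` of a permutation of `Fin r`. -/
def drops {r : ℕ} (σ : Equiv.Perm (Fin r)) : ℕ :=
  (Finset.univ.filter fun i => σ i < i).card

/-- The number of jumps `c_>(σ) = #{i : σ(i) > i}` of a permutation of `Fin r`. -/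
def jumps {r : ℕ} (σ : Equiv.Perm (Fin r)) : ℕ :=
  (Finset.univ.filter fun i => i < σ i).card

/-- The height `ht(σ) = ∑_i |σ(i) - i|` of a permutation of `Fin r`. -/
def ht {r : ℕ} (σ : Equiv.Perm (Fin r)) : ℕ :=
  ∑ i : Fin r, Nat.dist ((σ i : ℕ)) (i : ℕ)

/-- If the permutation `σ` of `{1,…,r}` is not the identity but has a
fixed point, then there are `i`, `j` with `σ(i) ≠ i`, `σ(j) = j` such that
`σ' = σ ∘ (i j)` (transposition applied first, i.e. `σ * Equiv.swap i j`) has one more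
jump and the same number of drops as `σ`. -/
lemma sum_split {r : ℕ} (i j : Fin r) (hij : i ≠ j) (g : Fin r → ℕ) :
    ∑ k, g k = g i + g j + ∑ k ∈ (Finset.univ.erase i).erase j, g k := by
  rw [← Finset.add_sum_erase _ g (Finset.mem_univ i),
      ← Finset.add_sum_erase _ g (Finset.mem_erase.mpr ⟨hij.symm, Finset.mem_univ j⟩),
      Finset.erase_right_comm]
  ring

lemma jumps_swap {r : ℕ} (σ : Equiv.Perm (Fin r)) (i j : Fin r) (hij : i ≠ j) :
    jumps (σ * Equiv.swap i j) + (if i < σ i then 1 else 0) + (if j < σ j then 1 else 0)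
      = jumps σ + (if i < σ j then 1 else 0) + (if j < σ i then 1 else 0) := by
  have h1 : ∀ τ : Equiv.Perm (Fin r), jumps τ = ∑ k, if k < τ k then (1:ℕ) else 0 := by
    intro τ; rw [jumps, Finset.card_filter]
  have hR : ∑ k ∈ (Finset.univ.erase i).erase j, (if k < (σ * Equiv.swap i j) k then (1:ℕ) else 0)
      = ∑ k ∈ (Finset.univ.erase i).erase j, (if k < σ k then (1:ℕ) else 0) := by
    apply Finset.sum_congr rfl
    intro k hk
    simp only [Finset.mem_erase] at hk
    rw [Equiv.Perm.mul_apply, Equiv.swap_apply_of_ne_of_ne hk.2.1 hk.1]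
  rw [h1, h1, sum_split i j hij, sum_split i j hij, hR]
  simp only [Equiv.Perm.mul_apply, Equiv.swap_apply_left, Equiv.swap_apply_right]
  set R := ∑ k ∈ (Finset.univ.erase i).erase j, (if k < σ k then (1:ℕ) else 0)
  split_ifs <;> omega

lemma drops_swap {r : ℕ} (σ : Equiv.Perm (Fin r)) (i j : Fin r) (hij : i ≠ j) :
    drops (σ * Equiv.swap i j) + (if σ i < i then 1 else 0) + (if σ j < j then 1 else 0)
      = drops σ + (if σ j < i then 1 else 0) + (if σ i < j then 1 else 0) := by
  have h1 : ∀ τ : Equiv.Perm (Fin r), drops τ = ∑ k, if τ k < k then (1:ℕ) else 0 := by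
    intro τ; rw [drops, Finset.card_filter]
  have hR : ∑ k ∈ (Finset.univ.erase i).erase j, (if (σ * Equiv.swap i j) k < k then (1:ℕ) else 0)
      = ∑ k ∈ (Finset.univ.erase i).erase j, (if σ k < k then (1:ℕ) else 0) := by
    apply Finset.sum_congr rfl
    intro k hk
    simp only [Finset.mem_erase] at hk
    rw [Equiv.Perm.mul_apply, Equiv.swap_apply_of_ne_of_ne hk.2.1 hk.1]
  rw [h1, h1, sum_split i j hij, sum_split i j hij, hR]
  simp only [Equiv.Perm.mul_apply, Equiv.swap_apply_left, Equiv.swap_apply_right]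
  set R := ∑ k ∈ (Finset.univ.erase i).erase j, (if σ k < k then (1:ℕ) else 0)
  split_ifs <;> omega

theorem exists_swap_add_jump (r : ℕ) (σ : Equiv.Perm (Fin r)) (hne : σ ≠ 1)
    (hfix : ∃ j, σ j = j) :
    ∃ i j : Fin r, σ i ≠ i ∧ σ j = j ∧
      jumps (σ * Equiv.swap i j) = jumps σ + 1 ∧ drops (σ * Equiv.swap i j) = drops σ := by
  classical
  obtain ⟨j0, hj0⟩ := hfix
  have hS : ∃ k, σ k ≠ k := by
    by_contra h
    push_neg at h
    exact hne (Equiv.ext (by simp [h]))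
  set T := Finset.univ.filter (fun k => σ k ≠ k ∧ k < j0) with hT
  by_cases hTne : T.Nonempty
  · set i := T.max' hTne with hi
    have hiT : i ∈ T := T.max'_mem hTne
    rw [hT, Finset.mem_filter] at hiT
    obtain ⟨-, hine, hilt⟩ := hiT
    have hij : i ≠ j0 := hilt.ne
    have hjs := jumps_swap σ i j0 hij
    have hds := drops_swap σ i j0 hij
    rw [hj0] at hjs hds
    rcases hine.lt_or_gt with h | h
    · -- σ i < i < j0 : case (a)
      refine ⟨i, j0, hine, hj0, ?_, ?_⟩
      · rw [if_pos hilt, if_neg (by omega), if_neg (by omega), if_neg (by omega)] at hjs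
        omega
      · rw [if_pos h, if_neg (by omega), if_neg (by omega), if_pos (by omega)] at hds
        omega
    · -- i < σ i : show j0 < σ i, case (b)
      have h1 : σ i ≠ j0 := fun heq => hij (σ.injective (heq.trans hj0.symm))
      have h2 : ¬ σ i < j0 := by
        intro hlt
        have hmem : σ i ∈ T := by
          rw [hT, Finset.mem_filter]
          refine ⟨Finset.mem_univ _, fun heq => hine (σ.injective heq), hlt⟩
        have := T.le_max' (σ i) hmem
        exact absurd (lt_of_lt_of_le h this) (lt_irrefl i)
      have hgt : j0 < σ i := by
        rcases lt_trichotomy (σ i) j0 with h' | h' | h'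
        · exact absurd h' h2
        · exact absurd h' h1
        · exact h'
      refine ⟨i, j0, hine, hj0, ?_, ?_⟩
      · rw [if_pos h, if_neg (by omega), if_pos hilt, if_pos hgt] at hjs
        omega
      · rw [if_neg (by omega), if_neg (by omega), if_neg (by omega), if_neg (by omega)] at hds
        omega
  · -- no non-fixed point below j0 : case (c)
    have hTfix : ∀ k : Fin r, σ k ≠ k → ¬ k < j0 := by
      intro k hk hklt
      exact hTne ⟨k, by rw [hT, Finset.mem_filter]; exact ⟨Finset.mem_univ _, hk, hklt⟩⟩
    set Su := Finset.univ.filter (fun k => σ k ≠ k) with hSu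
    have hSune : Su.Nonempty := by
      obtain ⟨k, hk⟩ := hS
      exact ⟨k, by rw [hSu, Finset.mem_filter]; exact ⟨Finset.mem_univ _, hk⟩⟩
    set m := Su.min' hSune with hm
    have hmS : m ∈ Su := Su.min'_mem hSune
    rw [hSu, Finset.mem_filter] at hmS
    have hmne : σ m ≠ m := hmS.2
    set i := σ.symm m with hidef
    have hσi : σ i = m := σ.apply_symm_apply m
    have him : i ≠ m := fun heq => hmne (by rw [← heq, hσi, heq])
    have hine : σ i ≠ i := by rw [hσi]; exact him.symm
    have hiSu : i ∈ Su := by rw [hSu, Finset.mem_filter]; exact ⟨Finset.mem_univ _, hine⟩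
    have hmi : m < i := lt_of_le_of_ne (Su.min'_le i hiSu) him.symm
    have hmj : j0 < m := by
      have h1 : ¬ m < j0 := hTfix m hmne
      have h2 : m ≠ j0 := fun heq => hmne (by rw [heq]; exact hj0)
      rcases lt_trichotomy m j0 with h' | h' | h'
      · exact absurd h' h1
      · exact absurd h' h2
      · exact h'
    have hij : i ≠ j0 := by
      intro heq
      exact hine (by rw [heq]; exact hj0)
    have hjs := jumps_swap σ i j0 hij
    have hds := drops_swap σ i j0 hij
    rw [hj0, hσi] at hjs hds
    refine ⟨i, j0, hine, hj0, ?_, ?_⟩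
    · rw [if_neg (by omega), if_neg (by omega), if_neg (by omega), if_pos hmj] at hjs
      omega
    · rw [if_pos hmi, if_neg (by omega), if_pos (by omega), if_neg (by omega)] at hds
      omega

end PermStats
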